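/- Suppose (Wₙ)ₙ are random variables whose scaled cumulant generating function 𝓦(p) = limₙ (1/n) log E[e^{pWₙ}] exists for p in an open interval (−1,1), is differentiable and strictly convex there, and equals +∞ outside [−1,1]. Let c₋ = lim_{p→−1⁺} 𝓦′(p) and c₊ = lim_{p→1⁻} 𝓦′(p), and let I(q) = sup_{p∈(−1,1)}(pq − 𝓦(p)). Then for every open interval J with J ∩ (c₋, c₊) ≠ ∅, limₙ (1/n) log P{Wₙ/n ∈ J} = −inf_{q ∈ J ∩ (c₋,c₊)} I(q). -/

import Mathlib

open MeasureTheory Filter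

section Aux
variable {Ω : Type*} [MeasurableSpace Ω] {μ : Measure Ω} [IsProbabilityMeasure μ]

lemma GE_int_mono {g : Ω → ℝ} (hg : Measurable g) {p p' : ℝ}
    (h : ∀ w : ℝ, p * w ≤ max 0 (p' * w))
    (hint : Integrable (fun ω => Real.exp (p' * g ω)) μ) :
    Integrable (fun ω => Real.exp (p * g ω)) μ := by
  refine Integrable.mono' (g := fun ω => 1 + Real.exp (p' * g ω))
    ((integrable_const 1).add hint) ((hg.const_mul p).exp.aestronglyMeasurable) ?_
  filter_upwards with ω
  rw [Real.norm_eq_abs, abs_of_pos (Real.exp_pos _)]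
  calc Real.exp (p * g ω) ≤ Real.exp (max 0 (p' * g ω)) := Real.exp_le_exp.2 (h _)
    _ ≤ 1 + Real.exp (p' * g ω) := by
        rcases le_total 0 (p' * g ω) with h' | h'
        · rw [max_eq_right h']; nlinarith [Real.exp_pos (p' * g ω)]
        · rw [max_eq_left h']; simp [Real.exp_le_exp]
          positivity

lemma GE_integral_exp_pos {g : Ω → ℝ} {p : ℝ}
    (hint : Integrable (fun ω => Real.exp (p * g ω)) μ) :
    0 < ∫ ω, Real.exp (p * g ω) ∂μ := by
  rw [integral_pos_iff_support_of_nonneg (fun ω => (Real.exp_pos _).le) hint]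
  have : (Function.support fun ω => Real.exp (p * g ω)) = Set.univ := by
    ext ω; simp [Function.support, Real.exp_ne_zero]
  simp [this]

lemma GE_chernoff {g : Ω → ℝ} (hg : Measurable g) {S : Set Ω} (hS : MeasurableSet S)
    {p c : ℝ} (hb : ∀ ω ∈ S, c ≤ p * g ω)
    (hint : Integrable (fun ω => Real.exp (p * g ω)) μ) :
    (μ S).toReal * Real.exp c ≤ ∫ ω, Real.exp (p * g ω) ∂μ := by
  have h1 : Real.exp c * (μ S).toReal ≤ ∫ ω in S, Real.exp (p * g ω) ∂μ :=
    setIntegral_ge_of_const_le_real hS (measure_ne_top μ S)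
      (fun ω hω => Real.exp_le_exp.2 (hb ω hω)) hint.integrableOn
  have h2 : ∫ ω in S, Real.exp (p * g ω) ∂μ ≤ ∫ ω, Real.exp (p * g ω) ∂μ :=
    setIntegral_le_integral hint (Eventually.of_forall fun ω => (Real.exp_pos _).le)
  linarith [mul_comm (Real.exp c) ((μ S).toReal)]

lemma GE_tail_ionn {g : Ω → ℝ} (hg : Measurable g) {S : Set Ω} (hS : MeasurableSet S)
    {p r c : ℝ} (hb : ∀ ω ∈ S, p * g ω ≤ r * g ω + c)
    (hint : Integrable (fun ω => Real.exp (r * g ω)) μ) :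
    IntegrableOn (fun ω => Real.exp (p * g ω)) S μ := by
  refine Integrable.mono' (g := fun ω => Real.exp c * Real.exp (r * g ω))
    (hint.const_mul _).integrableOn ((hg.const_mul p).exp.aestronglyMeasurable.restrict) ?_
  filter_upwards [ae_restrict_mem hS] with ω hω
  rw [Real.norm_eq_abs, abs_of_pos (Real.exp_pos _), ← Real.exp_add]
  exact Real.exp_le_exp.2 (by linarith [hb ω hω])

lemma GE_tail {g : Ω → ℝ} (hg : Measurable g) {S : Set Ω} (hS : MeasurableSet S)
    {p r c : ℝ} (hb : ∀ ω ∈ S, p * g ω ≤ r * g ω + c)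
    (hint : Integrable (fun ω => Real.exp (r * g ω)) μ) :
    ∫ ω in S, Real.exp (p * g ω) ∂μ ≤ Real.exp c * ∫ ω, Real.exp (r * g ω) ∂μ := by
  calc ∫ ω in S, Real.exp (p * g ω) ∂μ
      ≤ ∫ ω in S, Real.exp c * Real.exp (r * g ω) ∂μ :=
        setIntegral_mono_on (GE_tail_ionn hg hS hb hint) (hint.const_mul _).integrableOn hS
          (fun ω hω => by rw [← Real.exp_add]; exact Real.exp_le_exp.2 (by linarith [hb ω hω]))
    _ = Real.exp c * ∫ ω in S, Real.exp (r * g ω) ∂μ := integral_const_mul _ _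
    _ ≤ Real.exp c * ∫ ω, Real.exp (r * g ω) ∂μ := by
        have := setIntegral_le_integral (μ := μ) (s := S) hint
          (Eventually.of_forall fun ω => (Real.exp_pos (r * g ω)).le)
        exact mul_le_mul_of_nonneg_left this (Real.exp_pos c).le

lemma GE_set_le_const {g : Ω → ℝ} {S : Set Ω} (hS : MeasurableSet S)
    {p C : ℝ} (hb : ∀ ω ∈ S, p * g ω ≤ C)
    (hio : IntegrableOn (fun ω => Real.exp (p * g ω)) S μ) :
    ∫ ω in S, Real.exp (p * g ω) ∂μ ≤ Real.exp C * (μ S).toReal := by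
  calc ∫ ω in S, Real.exp (p * g ω) ∂μ
      ≤ ∫ _ω in S, Real.exp C ∂μ :=
        setIntegral_mono_on hio integrableOn_const hS
          (fun ω hω => Real.exp_le_exp.2 (hb ω hω))
    _ = Real.exp C * (μ S).toReal := by rw [setIntegral_const, smul_eq_mul, measureReal_def]; ring

end Aux

section Main
variable {Ω : Type*} [MeasurableSpace Ω] {μ : Measure Ω} [IsProbabilityMeasure μ]
  {W : ℕ → Ω → ℝ} {𝓦 : ℝ → ℝ}

lemma GE_ev_int (hmeas : ∀ n, Measurable (W n))
    (hlim : ∀ p ∈ Set.Ioo (-1 : ℝ) 1,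
      Tendsto (fun n : ℕ => (1 / (n : ℝ)) *
        Real.log (∫ ω, Real.exp (p * W n ω) ∂μ)) atTop (nhds (𝓦 p)))
    (hconv : StrictConvexOn ℝ (Set.Ioo (-1) 1) 𝓦) :
    ∀ p ∈ Set.Ioo (-1 : ℝ) 1, ∀ᶠ n in atTop, Integrable (fun ω => Real.exp (p * W n ω)) μ := by
  intro p hp
  by_contra hcon
  rw [Filter.not_eventually] at hcon
  -- key : for suitable p', 𝓦 p' = 0
  have key : ∀ p' : ℝ, p' ∈ Set.Ioo (-1:ℝ) 1 → (∀ w : ℝ, p * w ≤ max 0 (p' * w)) → 𝓦 p' = 0 := by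
    intro p' hp' hw
    have hfreq : ∃ᶠ n : ℕ in atTop, (1/(n:ℝ)) * Real.log (∫ ω, Real.exp (p' * W n ω) ∂μ) = 0 := by
      refine hcon.mono fun n hn => ?_
      have : ∫ ω, Real.exp (p' * W n ω) ∂μ = 0 := by
        rcases em (Integrable (fun ω => Real.exp (p' * W n ω)) μ) with hi | hi
        · exact absurd (GE_int_mono (hmeas n) hw hi) hn
        · exact integral_undef hi
      rw [this, Real.log_zero, mul_zero]
    exact (tendsto_nhds_unique_of_frequently_eq (hlim p' hp') tendsto_const_nhds hfreq)
  rcases lt_trichotomy p 0 with hneg | hzero | hpos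
  · -- p < 0 : all p' in (-1, p) give 𝓦 p' = 0
    obtain ⟨hp1, hp2⟩ := hp
    have hall : ∀ p' : ℝ, p' ∈ Set.Ioo (-1:ℝ) p → 𝓦 p' = 0 := by
      intro p' hp'
      refine key p' ⟨hp'.1, lt_trans hp'.2 (lt_trans hneg one_pos)⟩ fun w => ?_
      rcases le_total w 0 with h | h
      · exact le_max_of_le_right (mul_le_mul_of_nonpos_right hp'.2.le h)
      · exact le_max_of_le_left (mul_nonpos_of_nonpos_of_nonneg hneg.le h)
    have hx' : (3*p - 1)/4 ∈ Set.Ioo (-1:ℝ) p := ⟨by linarith, by linarith⟩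
    have hz' : (7*p - 1)/8 ∈ Set.Ioo (-1:ℝ) p := ⟨by linarith, by linarith⟩
    have hy' : (1/2 : ℝ) * ((3*p - 1)/4) + (1/2 : ℝ) * ((7*p - 1)/8) ∈ Set.Ioo (-1:ℝ) p :=
      ⟨by linarith, by linarith⟩
    have hxz : (3*p - 1)/4 ≠ (7*p - 1)/8 := by intro h; nlinarith
    have hsub : Set.Ioo (-1:ℝ) p ⊆ Set.Ioo (-1:ℝ) 1 :=
      Set.Ioo_subset_Ioo le_rfl (lt_trans hneg one_pos).le
    have := hconv.2 (hsub hx') (hsub hz') hxz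
      (by norm_num : (0:ℝ) < 1/2) (by norm_num : (0:ℝ) < 1/2) (by norm_num)
    simp only [smul_eq_mul] at this
    rw [hall _ hx', hall _ hz', hall _ hy'] at this
    norm_num at this
  · -- p = 0 : integrand is constant 1
    subst hzero
    refine hcon.exists.elim fun n hn => hn ?_
    simp only [zero_mul, Real.exp_zero]; exact (integrable_const (1:ℝ) : Integrable (fun _ : Ω => (1:ℝ)) μ)
  · -- 0 < p
    obtain ⟨hp1, hp2⟩ := hp
    have hall : ∀ p' : ℝ, p' ∈ Set.Ioo p 1 → 𝓦 p' = 0 := by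
      intro p' hp'
      refine key p' ⟨lt_trans (by linarith) hp'.1, hp'.2⟩ fun w => ?_
      rcases le_total 0 w with h | h
      · exact le_max_of_le_right (mul_le_mul_of_nonneg_right hp'.1.le h)
      · exact le_max_of_le_left (mul_nonpos_of_nonneg_of_nonpos hpos.le h)
    have hx' : (3*p + 1)/4 ∈ Set.Ioo p 1 := ⟨by linarith, by linarith⟩
    have hz' : (7*p + 1)/8 ∈ Set.Ioo p 1 := ⟨by linarith, by linarith⟩
    have hy' : (1/2 : ℝ) * ((3*p + 1)/4) + (1/2 : ℝ) * ((7*p + 1)/8) ∈ Set.Ioo p 1 :=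
      ⟨by linarith, by linarith⟩
    have hxz : (3*p + 1)/4 ≠ (7*p + 1)/8 := by intro h; nlinarith
    have hsub : Set.Ioo p 1 ⊆ Set.Ioo (-1:ℝ) 1 :=
      Set.Ioo_subset_Ioo (by linarith) le_rfl
    have := hconv.2 (hsub hx') (hsub hz') hxz
      (by norm_num : (0:ℝ) < 1/2) (by norm_num : (0:ℝ) < 1/2) (by norm_num)
    simp only [smul_eq_mul] at this
    rw [hall _ hx', hall _ hz', hall _ hy'] at this
    norm_num at this

lemma GE_W0 (hlim : ∀ p ∈ Set.Ioo (-1 : ℝ) 1,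
      Tendsto (fun n : ℕ => (1 / (n : ℝ)) *
        Real.log (∫ ω, Real.exp (p * W n ω) ∂μ)) atTop (nhds (𝓦 p))) :
    𝓦 0 = 0 := by
  have h := hlim 0 (by constructor <;> norm_num)
  have h0 : (fun n : ℕ => (1/(n:ℝ)) * Real.log (∫ ω, Real.exp (0 * W n ω) ∂μ)) =
      fun _ => (0:ℝ) := by
    funext n; simp
  rw [h0] at h
  exact (tendsto_nhds_unique h tendsto_const_nhds)

end Main

section Deriv
variable {𝓦 : ℝ → ℝ} {cm cp : ℝ}

lemma GE_hasDeriv (hdiff : DifferentiableOn ℝ 𝓦 (Set.Ioo (-1) 1)) :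
    ∀ p ∈ Set.Ioo (-1:ℝ) 1, HasDerivAt 𝓦 (derivWithin 𝓦 (Set.Ioo (-1:ℝ) 1) p) p := by
  intro p hp
  have h1 : DifferentiableAt ℝ 𝓦 p := (hdiff p hp).differentiableAt (isOpen_Ioo.mem_nhds hp)
  rw [derivWithin_of_isOpen isOpen_Ioo hp]
  exact h1.hasDerivAt

lemma GE_lt_cp (hdiff : DifferentiableOn ℝ 𝓦 (Set.Ioo (-1) 1))
    (hconv : StrictConvexOn ℝ (Set.Ioo (-1) 1) 𝓦)
    (hcp : Tendsto (derivWithin 𝓦 (Set.Ioo (-1 : ℝ) 1))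
      (nhdsWithin 1 (Set.Iio 1)) (nhds cp)) :
    ∀ x ∈ Set.Ioo (-1:ℝ) 1, derivWithin 𝓦 (Set.Ioo (-1:ℝ) 1) x < cp := by
  intro x hx
  obtain ⟨hx1, hx2⟩ := hx
  have hmono := hconv.strictMonoOn_derivWithin hdiff
  set x' := (x+1)/2 with hx'
  have hxx' : x < x' := by rw [hx']; linarith
  have hx'mem : x' ∈ Set.Ioo (-1:ℝ) 1 := ⟨by rw [hx']; linarith, by rw [hx']; linarith⟩
  have hev : ∀ᶠ y in nhdsWithin 1 (Set.Iio 1),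
      derivWithin 𝓦 (Set.Ioo (-1:ℝ) 1) x' ≤ derivWithin 𝓦 (Set.Ioo (-1:ℝ) 1) y := by
    filter_upwards [Ioo_mem_nhdsLT_of_mem (⟨hx'mem.2, le_refl (1:ℝ)⟩ : (1:ℝ) ∈ Set.Ioc x' 1)]
      with y hy
    exact (hmono hx'mem ⟨lt_trans hx'mem.1 hy.1, hy.2⟩ hy.1).le
  have h2 : derivWithin 𝓦 (Set.Ioo (-1:ℝ) 1) x' ≤ cp := ge_of_tendsto hcp hev
  exact lt_of_lt_of_le (hmono ⟨hx1, hx2⟩ hx'mem hxx') h2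

lemma GE_cm_lt (hdiff : DifferentiableOn ℝ 𝓦 (Set.Ioo (-1) 1))
    (hconv : StrictConvexOn ℝ (Set.Ioo (-1) 1) 𝓦)
    (hcm : Tendsto (derivWithin 𝓦 (Set.Ioo (-1 : ℝ) 1))
      (nhdsWithin (-1) (Set.Ioi (-1))) (nhds cm)) :
    ∀ x ∈ Set.Ioo (-1:ℝ) 1, cm < derivWithin 𝓦 (Set.Ioo (-1:ℝ) 1) x := by
  intro x hx
  obtain ⟨hx1, hx2⟩ := hx
  have hmono := hconv.strictMonoOn_derivWithin hdiff
  set x' := (x + -1)/2 with hx'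
  have hxx' : x' < x := by rw [hx']; linarith
  have hx'mem : x' ∈ Set.Ioo (-1:ℝ) 1 := ⟨by rw [hx']; linarith, by rw [hx']; linarith⟩
  have hev : ∀ᶠ y in nhdsWithin (-1) (Set.Ioi (-1)),
      derivWithin 𝓦 (Set.Ioo (-1:ℝ) 1) y ≤ derivWithin 𝓦 (Set.Ioo (-1:ℝ) 1) x' := by
    filter_upwards [Ioo_mem_nhdsGT_of_mem (⟨le_refl (-1:ℝ), hx'mem.1⟩ : (-1:ℝ) ∈ Set.Ico (-1:ℝ) x')]
      with y hy
    exact (hmono ⟨hy.1, lt_trans hy.2 hx'mem.2⟩ hx'mem hy.2).le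
  have h2 : cm ≤ derivWithin 𝓦 (Set.Ioo (-1:ℝ) 1) x' := le_of_tendsto hcm hev
  exact lt_of_le_of_lt h2 (hmono hx'mem ⟨hx1, hx2⟩ hxx')

lemma GE_surj (hdiff : DifferentiableOn ℝ 𝓦 (Set.Ioo (-1) 1))
    (hcm : Tendsto (derivWithin 𝓦 (Set.Ioo (-1 : ℝ) 1))
      (nhdsWithin (-1) (Set.Ioi (-1))) (nhds cm))
    (hcp : Tendsto (derivWithin 𝓦 (Set.Ioo (-1 : ℝ) 1))
      (nhdsWithin 1 (Set.Iio 1)) (nhds cp)) :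
    ∀ q ∈ Set.Ioo cm cp, ∃ p ∈ Set.Ioo (-1:ℝ) 1, derivWithin 𝓦 (Set.Ioo (-1:ℝ) 1) p = q := by
  intro q hq
  have hu : ∃ u, u ∈ Set.Ioo (-1:ℝ) 0 ∧ derivWithin 𝓦 (Set.Ioo (-1:ℝ) 1) u < q := by
    have h1 : ∀ᶠ y in nhdsWithin (-1:ℝ) (Set.Ioi (-1)),
        derivWithin 𝓦 (Set.Ioo (-1:ℝ) 1) y < q := hcm.eventually_lt_const hq.1
    have h2 : Set.Ioo (-1:ℝ) 0 ∈ nhdsWithin (-1:ℝ) (Set.Ioi (-1)) :=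
      Ioo_mem_nhdsGT_of_mem ⟨le_refl _, by norm_num⟩
    exact ((eventually_of_mem h2 (fun y hy => hy)).and h1).exists.imp fun u hu => ⟨hu.1, hu.2⟩
  have hv : ∃ v, v ∈ Set.Ioo (0:ℝ) 1 ∧ q < derivWithin 𝓦 (Set.Ioo (-1:ℝ) 1) v := by
    have h1 : ∀ᶠ y in nhdsWithin (1:ℝ) (Set.Iio 1),
        q < derivWithin 𝓦 (Set.Ioo (-1:ℝ) 1) y := hcp.eventually_const_lt hq.2
    have h2 : Set.Ioo (0:ℝ) 1 ∈ nhdsWithin (1:ℝ) (Set.Iio 1) :=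
      Ioo_mem_nhdsLT_of_mem ⟨by norm_num, le_refl _⟩
    exact ((eventually_of_mem h2 (fun y hy => hy)).and h1).exists.imp fun v hv => ⟨hv.1, hv.2⟩
  obtain ⟨u, hu, huq⟩ := hu
  obtain ⟨v, hv, hqv⟩ := hv
  have huv : u ≤ v := le_trans hu.2.le hv.1.le
  have hsub : Set.Icc u v ⊆ Set.Ioo (-1:ℝ) 1 := fun y hy =>
    ⟨lt_of_lt_of_le hu.1 hy.1, lt_of_le_of_lt hy.2 hv.2⟩
  have hD : ∀ y ∈ Set.Icc u v,
      HasDerivWithinAt 𝓦 (derivWithin 𝓦 (Set.Ioo (-1:ℝ) 1) y) (Set.Icc u v) y := fun y hy =>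
    (GE_hasDeriv hdiff y (hsub hy)).hasDerivWithinAt
  have := exists_hasDerivWithinAt_eq_of_gt_of_lt huv hD huq hqv
  obtain ⟨p, hp, hpq⟩ := this
  exact ⟨p, hsub (Set.Ioo_subset_Icc_self hp), hpq⟩

lemma GE_subgrad (hdiff : DifferentiableOn ℝ 𝓦 (Set.Ioo (-1) 1))
    (hconv : StrictConvexOn ℝ (Set.Ioo (-1) 1) 𝓦) :
    ∀ p ∈ Set.Ioo (-1:ℝ) 1, ∀ r ∈ Set.Ioo (-1:ℝ) 1,
      derivWithin 𝓦 (Set.Ioo (-1:ℝ) 1) p * (r - p) ≤ 𝓦 r - 𝓦 p := by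
  intro p hp r hr
  rcases lt_trichotomy r p with h | h | h
  · have := hconv.convexOn.slope_le_derivWithin hr hp h (hdiff p hp)
    rw [slope_def_field] at this
    rw [div_le_iff₀ (by linarith : (0:ℝ) < p - r)] at this
    nlinarith
  · subst h; simp
  · have := hconv.convexOn.derivWithin_le_slope hp hr h (hdiff p hp)
    rw [slope_def_field] at this
    rw [le_div_iff₀ (by linarith : (0:ℝ) < r - p)] at this
    nlinarith

lemma GE_sup (hdiff : DifferentiableOn ℝ 𝓦 (Set.Ioo (-1) 1))
    (hconv : StrictConvexOn ℝ (Set.Ioo (-1) 1) 𝓦)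
    {p : ℝ} (hp : p ∈ Set.Ioo (-1:ℝ) 1) :
    sSup ((fun r => r * derivWithin 𝓦 (Set.Ioo (-1:ℝ) 1) p - 𝓦 r) '' Set.Ioo (-1:ℝ) 1) =
      p * derivWithin 𝓦 (Set.Ioo (-1:ℝ) 1) p - 𝓦 p := by
  refine IsGreatest.csSup_eq ⟨⟨p, hp, rfl⟩, ?_⟩
  rintro y ⟨r, hr, rfl⟩
  have h := GE_subgrad hdiff hconv p hp r hr
  show r * derivWithin 𝓦 (Set.Ioo (-1:ℝ) 1) p - 𝓦 r ≤ p * derivWithin 𝓦 (Set.Ioo (-1:ℝ) 1) p - 𝓦 p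
  nlinarith [h]

lemma GE_right_step (hdiff : DifferentiableOn ℝ 𝓦 (Set.Ioo (-1) 1))
    {p δ : ℝ} (hp : p ∈ Set.Ioo (-1:ℝ) 1) (hδ : 0 < δ) :
    ∃ t, 0 < t ∧ p + t ∈ Set.Ioo (-1:ℝ) 1 ∧
      𝓦 (p + t) - t * (derivWithin 𝓦 (Set.Ioo (-1:ℝ) 1) p + δ) ≤ 𝓦 p - δ * t / 2 := by
  set q := derivWithin 𝓦 (Set.Ioo (-1:ℝ) 1) p with hq
  have hd := GE_hasDeriv hdiff p hp
  have hslope : Tendsto (slope 𝓦 p) (nhdsWithin p (Set.Ioi p)) (nhds q) :=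
    (hasDerivAt_iff_tendsto_slope.mp hd).mono_left
      (nhdsWithin_mono p fun x hx => ne_of_gt hx)
  have h1 : ∀ᶠ y in nhdsWithin p (Set.Ioi p), slope 𝓦 p y < q + δ/2 :=
    hslope.eventually_lt_const (by linarith)
  have h2 : Set.Ioo p 1 ∈ nhdsWithin p (Set.Ioi p) :=
    Ioo_mem_nhdsGT_of_mem ⟨le_refl _, hp.2⟩
  obtain ⟨y, hy, hys⟩ := ((eventually_of_mem h2 (fun y hy => hy)).and h1).exists
  refine ⟨y - p, by linarith [hy.1], by simpa using ⟨lt_trans hp.1 hy.1, hy.2⟩, ?_⟩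
  rw [slope_def_field, div_lt_iff₀ (by linarith [hy.1] : (0:ℝ) < y - p)] at hys
  have : p + (y - p) = y := by ring
  rw [this]
  nlinarith [hy.1]

lemma GE_left_step (hdiff : DifferentiableOn ℝ 𝓦 (Set.Ioo (-1) 1))
    {p δ : ℝ} (hp : p ∈ Set.Ioo (-1:ℝ) 1) (hδ : 0 < δ) :
    ∃ s, 0 < s ∧ p - s ∈ Set.Ioo (-1:ℝ) 1 ∧
      𝓦 (p - s) + s * (derivWithin 𝓦 (Set.Ioo (-1:ℝ) 1) p - δ) ≤ 𝓦 p - δ * s / 2 := by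
  set q := derivWithin 𝓦 (Set.Ioo (-1:ℝ) 1) p with hq
  have hd := GE_hasDeriv hdiff p hp
  have hslope : Tendsto (slope 𝓦 p) (nhdsWithin p (Set.Iio p)) (nhds q) :=
    (hasDerivAt_iff_tendsto_slope.mp hd).mono_left
      (nhdsWithin_mono p fun x hx => ne_of_lt hx)
  have h1 : ∀ᶠ y in nhdsWithin p (Set.Iio p), q - δ/2 < slope 𝓦 p y :=
    hslope.eventually_const_lt (by linarith)
  have h2 : Set.Ioo (-1:ℝ) p ∈ nhdsWithin p (Set.Iio p) :=
    Ioo_mem_nhdsLT_of_mem ⟨hp.1, le_refl _⟩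
  obtain ⟨y, hy, hys⟩ := ((eventually_of_mem h2 (fun y hy => hy)).and h1).exists
  refine ⟨p - y, by linarith [hy.2], by simpa using ⟨hy.1, lt_trans hy.2 hp.2⟩, ?_⟩
  rw [slope_def_field, lt_div_iff_of_neg (by linarith [hy.2] : y - p < 0)] at hys
  have : p - (p - y) = y := by ring
  rw [this]
  nlinarith [hy.2]

end Deriv

section LowerBound
variable {Ω : Type*} [MeasurableSpace Ω] {μ : Measure Ω} [IsProbabilityMeasure μ]
  {W : ℕ → Ω → ℝ} {𝓦 : ℝ → ℝ}

set_option maxHeartbeats 2000000 in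
lemma GE_lower (hmeas : ∀ n, Measurable (W n))
    (hlim : ∀ p ∈ Set.Ioo (-1 : ℝ) 1,
      Tendsto (fun n : ℕ => (1 / (n : ℝ)) *
        Real.log (∫ ω, Real.exp (p * W n ω) ∂μ)) atTop (nhds (𝓦 p)))
    (hdiff : DifferentiableOn ℝ 𝓦 (Set.Ioo (-1) 1))
    (hconv : StrictConvexOn ℝ (Set.Ioo (-1) 1) 𝓦)
    {p a b δ ε : ℝ} (hp : p ∈ Set.Ioo (-1:ℝ) 1) (hδ : 0 < δ) (hε : 0 < ε)
    (ha : a ≤ derivWithin 𝓦 (Set.Ioo (-1:ℝ) 1) p - δ)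
    (hb : derivWithin 𝓦 (Set.Ioo (-1:ℝ) 1) p + δ ≤ b) :
    ∀ᶠ n : ℕ in atTop,
      0 < (μ {ω | W n ω / n ∈ Set.Ioo a b}).toReal ∧
      -(p * derivWithin 𝓦 (Set.Ioo (-1:ℝ) 1) p - 𝓦 p) - δ - ε ≤
        (1 / (n:ℝ)) * Real.log ((μ {ω | W n ω / n ∈ Set.Ioo a b}).toReal) := by
  set q := derivWithin 𝓦 (Set.Ioo (-1:ℝ) 1) p with hqdef
  obtain ⟨t, ht, hptD, hRt⟩ := GE_right_step hdiff hp hδ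
  obtain ⟨s, hs, hpsD, hLs⟩ := GE_left_step hdiff hp hδ
  set c := min (min (δ*t/2) (δ*s/2)) ε with hcdef
  have hc : 0 < c := lt_min (lt_min (by positivity) (by positivity)) hε
  have hct : c ≤ δ*t/2 := le_trans (min_le_left _ _) (min_le_left _ _)
  have hcs : c ≤ δ*s/2 := le_trans (min_le_left _ _) (min_le_right _ _)
  have hcε : c ≤ ε := min_le_right _ _
  have hplt : |p| < 1 := abs_lt.mpr ⟨hp.1, hp.2⟩
  -- eventual facts
  have hlog2 : ∀ᶠ n : ℕ in atTop, (1/(n:ℝ)) * Real.log 2 < ε/2 := by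
    have h0 : Tendsto (fun n : ℕ => (1/(n:ℝ)) * Real.log 2) atTop (nhds 0) := by
      simpa using (tendsto_one_div_atTop_nhds_zero_nat.mul_const (Real.log 2))
    exact h0.eventually_lt_const (by positivity)
  have hexp : ∀ᶠ n : ℕ in atTop, Real.exp (-((n:ℝ) * (c/2))) < 1/4 := by
    have h1 : Tendsto (fun n : ℕ => (n:ℝ) * (c/2)) atTop atTop :=
      Tendsto.atTop_mul_const (by positivity) tendsto_natCast_atTop_atTop
    have h2 : Tendsto (fun n : ℕ => Real.exp (-((n:ℝ) * (c/2)))) atTop (nhds 0) :=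
      Real.tendsto_exp_atBot.comp (tendsto_neg_atTop_atBot.comp h1)
    exact h2.eventually_lt_const (by norm_num)
  filter_upwards [GE_ev_int hmeas hlim hconv p hp, GE_ev_int hmeas hlim hconv (p+t) hptD,
    GE_ev_int hmeas hlim hconv (p-s) hpsD,
    (hlim p hp).eventually_const_lt (show 𝓦 p - c/4 < 𝓦 p by linarith),
    (hlim (p+t) hptD).eventually_lt_const (show 𝓦 (p+t) < 𝓦 (p+t) + c/4 by linarith),
    (hlim (p-s) hpsD).eventually_lt_const (show 𝓦 (p-s) < 𝓦 (p-s) + c/4 by linarith),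
    eventually_ge_atTop 1, hlog2, hexp] with n hIp hIt hIs hZp hZt hZs hn1 hl2 hex
  have hn0 : (0:ℝ) < n := by exact_mod_cast Nat.lt_of_lt_of_le Nat.zero_lt_one hn1
  set g := W n with hgdef
  set Zp := ∫ ω, Real.exp (p * g ω) ∂μ with hZpdef
  set Zt := ∫ ω, Real.exp ((p+t) * g ω) ∂μ with hZtdef
  set Zs := ∫ ω, Real.exp ((p-s) * g ω) ∂μ with hZsdef
  have hZp_pos : 0 < Zp := GE_integral_exp_pos hIp
  have hZt_pos : 0 < Zt := GE_integral_exp_pos hIt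
  have hZs_pos : 0 < Zs := GE_integral_exp_pos hIs
  -- convert the log bounds
  have hZp_lo : Real.exp ((n:ℝ) * (𝓦 p - c/4)) ≤ Zp := by
    have h1 : (n:ℝ) * (𝓦 p - c/4) ≤ Real.log Zp := by
      have h2 := mul_le_mul_of_nonneg_left hZp.le hn0.le
      rwa [show (n:ℝ)*((1/(n:ℝ))*Real.log Zp) = Real.log Zp by field_simp] at h2
    calc Real.exp ((n:ℝ) * (𝓦 p - c/4)) ≤ Real.exp (Real.log Zp) := Real.exp_le_exp.2 h1
      _ = Zp := Real.exp_log hZp_pos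
  have hZt_hi : Zt ≤ Real.exp ((n:ℝ) * (𝓦 (p+t) + c/4)) := by
    have h1 : Real.log Zt ≤ (n:ℝ) * (𝓦 (p+t) + c/4) := by
      have h2 := mul_le_mul_of_nonneg_left hZt.le hn0.le
      rwa [show (n:ℝ)*((1/(n:ℝ))*Real.log Zt) = Real.log Zt by field_simp] at h2
    calc Zt = Real.exp (Real.log Zt) := (Real.exp_log hZt_pos).symm
      _ ≤ _ := Real.exp_le_exp.2 h1
  have hZs_hi : Zs ≤ Real.exp ((n:ℝ) * (𝓦 (p-s) + c/4)) := by
    have h1 : Real.log Zs ≤ (n:ℝ) * (𝓦 (p-s) + c/4) := by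
      have h2 := mul_le_mul_of_nonneg_left hZs.le hn0.le
      rwa [show (n:ℝ)*((1/(n:ℝ))*Real.log Zs) = Real.log Zs by field_simp] at h2
    calc Zs = Real.exp (Real.log Zs) := (Real.exp_log hZs_pos).symm
      _ ≤ _ := Real.exp_le_exp.2 h1
  -- the three sets
  set R : Set Ω := {ω | (n:ℝ)*(q+δ) ≤ g ω} with hRdef
  set L : Set Ω := {ω | g ω ≤ (n:ℝ)*(q-δ)} with hLdef
  set A' : Set Ω := {ω | (n:ℝ)*(q-δ) < g ω ∧ g ω < (n:ℝ)*(q+δ)} with hA'def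
  have hRm : MeasurableSet R := measurableSet_le measurable_const (hmeas n)
  have hLm : MeasurableSet L := measurableSet_le (hmeas n) measurable_const
  have hA'm : MeasurableSet A' :=
    (measurableSet_lt measurable_const (hmeas n)).inter
      (measurableSet_lt (hmeas n) measurable_const)
  -- tail bounds
  have hRbound : ∫ ω in R, Real.exp (p * g ω) ∂μ ≤ Zp * (1/4) := by
    have h1 : ∫ ω in R, Real.exp (p * g ω) ∂μ ≤ Real.exp (-(t * ((n:ℝ)*(q+δ)))) * Zt := by
      refine GE_tail (hmeas n) hRm (fun ω hω => ?_) hIt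
      have : (n:ℝ)*(q+δ) ≤ g ω := hω
      nlinarith
    have h2 : Real.exp (-(t * ((n:ℝ)*(q+δ)))) * Zt ≤
        Real.exp (-(t * ((n:ℝ)*(q+δ))) + (n:ℝ) * (𝓦 (p+t) + c/4)) := by
      rw [Real.exp_add]
      exact mul_le_mul_of_nonneg_left hZt_hi (Real.exp_pos _).le
    have h3 : -(t * ((n:ℝ)*(q+δ))) + (n:ℝ) * (𝓦 (p+t) + c/4) ≤
        (n:ℝ) * (𝓦 p - c/4) + (-((n:ℝ) * (c/2))) := by nlinarith
    calc ∫ ω in R, Real.exp (p * g ω) ∂μ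
        ≤ Real.exp ((n:ℝ) * (𝓦 p - c/4) + (-((n:ℝ) * (c/2)))) :=
          le_trans h1 (le_trans h2 (Real.exp_le_exp.2 h3))
      _ = Real.exp ((n:ℝ) * (𝓦 p - c/4)) * Real.exp (-((n:ℝ) * (c/2))) := Real.exp_add _ _
      _ ≤ Zp * (1/4) := by
          apply mul_le_mul hZp_lo hex.le (Real.exp_pos _).le hZp_pos.le
  have hLbound : ∫ ω in L, Real.exp (p * g ω) ∂μ ≤ Zp * (1/4) := by
    have h1 : ∫ ω in L, Real.exp (p * g ω) ∂μ ≤ Real.exp (s * ((n:ℝ)*(q-δ))) * Zs := by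
      refine GE_tail (hmeas n) hLm (fun ω hω => ?_) hIs
      have : g ω ≤ (n:ℝ)*(q-δ) := hω
      nlinarith
    have h2 : Real.exp (s * ((n:ℝ)*(q-δ))) * Zs ≤
        Real.exp (s * ((n:ℝ)*(q-δ)) + (n:ℝ) * (𝓦 (p-s) + c/4)) := by
      rw [Real.exp_add]
      exact mul_le_mul_of_nonneg_left hZs_hi (Real.exp_pos _).le
    have h3 : s * ((n:ℝ)*(q-δ)) + (n:ℝ) * (𝓦 (p-s) + c/4) ≤
        (n:ℝ) * (𝓦 p - c/4) + (-((n:ℝ) * (c/2))) := by nlinarith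
    calc ∫ ω in L, Real.exp (p * g ω) ∂μ
        ≤ Real.exp ((n:ℝ) * (𝓦 p - c/4) + (-((n:ℝ) * (c/2)))) :=
          le_trans h1 (le_trans h2 (Real.exp_le_exp.2 h3))
      _ = Real.exp ((n:ℝ) * (𝓦 p - c/4)) * Real.exp (-((n:ℝ) * (c/2))) := Real.exp_add _ _
      _ ≤ Zp * (1/4) := by
          apply mul_le_mul hZp_lo hex.le (Real.exp_pos _).le hZp_pos.le
  -- splitting
  have hcompl : A'ᶜ = L ∪ R := by
    ext ω
    simp only [hA'def, hLdef, hRdef, Set.mem_compl_iff, Set.mem_setOf_eq, Set.mem_union,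
      not_and_or, not_lt]
  have hdisj : Disjoint L R := by
    rw [Set.disjoint_left]
    intro ω hωL hωR
    have h1 : g ω ≤ (n:ℝ)*(q-δ) := hωL
    have h2 : (n:ℝ)*(q+δ) ≤ g ω := hωR
    nlinarith
  have hsplit : ∫ ω in A', Real.exp (p * g ω) ∂μ +
      (∫ ω in L, Real.exp (p * g ω) ∂μ + ∫ ω in R, Real.exp (p * g ω) ∂μ) = Zp := by
    rw [← setIntegral_union hdisj hRm hIp.integrableOn hIp.integrableOn, ← hcompl]
    exact integral_add_compl hA'm hIp
  have hA'int : Zp * (1/2) ≤ ∫ ω in A', Real.exp (p * g ω) ∂μ := by linarith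
  -- measure lower bound
  have hA'le : ∫ ω in A', Real.exp (p * g ω) ∂μ ≤
      Real.exp ((n:ℝ)*(p*q) + (n:ℝ)*(|p| * δ)) * (μ A').toReal := by
    refine GE_set_le_const hA'm (fun ω hω => ?_) hIp.integrableOn
    obtain ⟨h1, h2⟩ := hω
    rcases le_or_gt 0 p with hp0 | hp0
    · rw [abs_of_nonneg hp0]; nlinarith
    · rw [abs_of_neg hp0]; nlinarith
  have hμA' : Real.exp (-((n:ℝ)*(p*q) + (n:ℝ)*(|p| * δ))) * (Zp * (1/2)) ≤ (μ A').toReal := by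
    have h1 : Zp * (1/2) ≤ Real.exp ((n:ℝ)*(p*q) + (n:ℝ)*(|p| * δ)) * (μ A').toReal :=
      le_trans hA'int hA'le
    have h2 := mul_le_mul_of_nonneg_left h1 (Real.exp_pos (-((n:ℝ)*(p*q) + (n:ℝ)*(|p| * δ)))).le
    calc Real.exp (-((n:ℝ)*(p*q) + (n:ℝ)*(|p| * δ))) * (Zp * (1/2)) ≤
        Real.exp (-((n:ℝ)*(p*q) + (n:ℝ)*(|p| * δ))) *
          (Real.exp ((n:ℝ)*(p*q) + (n:ℝ)*(|p| * δ)) * (μ A').toReal) := h2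
      _ = (μ A').toReal := by
          rw [← mul_assoc, ← Real.exp_add,
            show -(↑n * (p * q) + ↑n * (|p| * δ)) + (↑n * (p * q) + ↑n * (|p| * δ)) = (0:ℝ) by ring,
            Real.exp_zero, one_mul]
  have hA'pos : 0 < (μ A').toReal := lt_of_lt_of_le (by positivity) hμA'
  -- A' ⊆ A
  set A : Set Ω := {ω | W n ω / n ∈ Set.Ioo a b} with hAdef
  have hsub : A' ⊆ A := by
    intro ω hω
    obtain ⟨h1, h2⟩ := hω
    constructor
    · have : q - δ < g ω / n := by rw [lt_div_iff₀ hn0]; linarith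
      linarith
    · have : g ω / n < q + δ := by rw [div_lt_iff₀ hn0]; linarith
      linarith
  have hμA : (μ A').toReal ≤ (μ A).toReal :=
    ENNReal.toReal_mono (measure_ne_top μ A) (measure_mono hsub)
  have hApos : 0 < (μ A).toReal := lt_of_lt_of_le hA'pos hμA
  refine ⟨hApos, ?_⟩
  -- log computation
  have hlogA : -((n:ℝ)*(p*q) + (n:ℝ)*(|p| * δ)) + (Real.log Zp - Real.log 2) ≤
      Real.log ((μ A).toReal) := by
    have h1 : Real.log (Real.exp (-((n:ℝ)*(p*q) + (n:ℝ)*(|p| * δ))) * (Zp * (1/2))) ≤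
        Real.log ((μ A).toReal) :=
      Real.log_le_log (by positivity) (le_trans hμA' hμA)
    rw [Real.log_mul (Real.exp_ne_zero _) (by positivity), Real.log_exp] at h1
    have h2 : Real.log (Zp * (1/2)) = Real.log Zp - Real.log 2 := by
      rw [Real.log_mul hZp_pos.ne' (by norm_num), one_div, Real.log_inv]
      ring
    rw [h2] at h1
    exact h1
  have hfinal : -(p*q - 𝓦 p) - δ - ε ≤ (1/(n:ℝ)) * Real.log ((μ A).toReal) := by
    have h1 : (1/(n:ℝ)) * (-((n:ℝ)*(p*q) + (n:ℝ)*(|p| * δ)) + (Real.log Zp - Real.log 2)) ≤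
        (1/(n:ℝ)) * Real.log ((μ A).toReal) :=
      mul_le_mul_of_nonneg_left hlogA (by positivity)
    have h2 : (1/(n:ℝ)) * (-((n:ℝ)*(p*q) + (n:ℝ)*(|p| * δ)) + (Real.log Zp - Real.log 2)) =
        -(p*q) - |p| * δ + (1/(n:ℝ)) * Real.log Zp - (1/(n:ℝ)) * Real.log 2 := by
      field_simp
      ring
    rw [h2] at h1
    have h3 : 𝓦 p - c/4 ≤ (1/(n:ℝ)) * Real.log Zp := hZp.le
    have h4 : |p| * δ ≤ δ := by nlinarith [abs_nonneg p, hplt]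
    nlinarith [h1]
  exact hfinal

end LowerBound

section UpperBound
variable {Ω : Type*} [MeasurableSpace Ω] {μ : Measure Ω} [IsProbabilityMeasure μ]
  {W : ℕ → Ω → ℝ} {𝓦 : ℝ → ℝ}

lemma GE_upper_right (hmeas : ∀ n, Measurable (W n))
    (hlim : ∀ p ∈ Set.Ioo (-1 : ℝ) 1,
      Tendsto (fun n : ℕ => (1 / (n : ℝ)) *
        Real.log (∫ ω, Real.exp (p * W n ω) ∂μ)) atTop (nhds (𝓦 p)))
    (hconv : StrictConvexOn ℝ (Set.Ioo (-1) 1) 𝓦)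
    {p a : ℝ} (hp : p ∈ Set.Ioo (-1:ℝ) 1) (hp0 : 0 ≤ p) {ε : ℝ} (hε : 0 < ε) (b : ℝ) :
    ∀ᶠ n : ℕ in atTop, 0 < (μ {ω | W n ω / n ∈ Set.Ioo a b}).toReal →
      (1/(n:ℝ)) * Real.log ((μ {ω | W n ω / n ∈ Set.Ioo a b}).toReal) ≤ -(p*a - 𝓦 p) + ε := by
  filter_upwards [GE_ev_int hmeas hlim hconv p hp,
    (hlim p hp).eventually_lt_const (show 𝓦 p < 𝓦 p + ε by linarith),
    eventually_ge_atTop 1] with n hI hZ hn1 hpos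
  have hn0 : (0:ℝ) < n := by exact_mod_cast Nat.lt_of_lt_of_le Nat.zero_lt_one hn1
  set Z := ∫ ω, Real.exp (p * W n ω) ∂μ with hZdef
  have hZpos : 0 < Z := GE_integral_exp_pos hI
  set S : Set Ω := {ω | (n:ℝ)*a ≤ W n ω} with hSdef
  have hSm : MeasurableSet S := measurableSet_le measurable_const (hmeas n)
  have hch : (μ S).toReal * Real.exp ((n:ℝ)*(p*a)) ≤ Z := by
    refine GE_chernoff (hmeas n) hSm (fun ω hω => ?_) hI
    have : (n:ℝ)*a ≤ W n ω := hω
    nlinarith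
  have hsub : {ω | W n ω / n ∈ Set.Ioo a b} ⊆ S := by
    intro ω hω
    have h1 : a < W n ω / n := hω.1
    have h2 : a * (n:ℝ) < W n ω := by rwa [lt_div_iff₀ hn0] at h1
    show (n:ℝ)*a ≤ W n ω
    linarith
  have hμ : (μ {ω | W n ω / n ∈ Set.Ioo a b}).toReal ≤ Z * Real.exp (-((n:ℝ)*(p*a))) := by
    have h1 : (μ {ω | W n ω / n ∈ Set.Ioo a b}).toReal ≤ (μ S).toReal :=
      ENNReal.toReal_mono (measure_ne_top μ S) (measure_mono hsub)
    have h2 : (μ S).toReal ≤ Z * Real.exp (-((n:ℝ)*(p*a))) := by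
      have h3 := mul_le_mul_of_nonneg_right hch (Real.exp_pos (-((n:ℝ)*(p*a)))).le
      rw [mul_assoc, ← Real.exp_add] at h3
      simpa using h3
    linarith
  have hlog : Real.log ((μ {ω | W n ω / n ∈ Set.Ioo a b}).toReal) ≤
      Real.log Z - (n:ℝ)*(p*a) := by
    have h1 := Real.log_le_log hpos hμ
    rwa [Real.log_mul hZpos.ne' (Real.exp_ne_zero _), Real.log_exp] at h1
  have h1 := mul_le_mul_of_nonneg_left hlog (show (0:ℝ) ≤ 1/(n:ℝ) by positivity)
  have h2 : (1/(n:ℝ)) * (Real.log Z - (n:ℝ)*(p*a)) = (1/(n:ℝ)) * Real.log Z - p*a := by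
    field_simp
  rw [h2] at h1
  have h3 : (1/(n:ℝ)) * Real.log Z < 𝓦 p + ε := hZ
  linarith

lemma GE_upper_left (hmeas : ∀ n, Measurable (W n))
    (hlim : ∀ p ∈ Set.Ioo (-1 : ℝ) 1,
      Tendsto (fun n : ℕ => (1 / (n : ℝ)) *
        Real.log (∫ ω, Real.exp (p * W n ω) ∂μ)) atTop (nhds (𝓦 p)))
    (hconv : StrictConvexOn ℝ (Set.Ioo (-1) 1) 𝓦)
    {p b : ℝ} (hp : p ∈ Set.Ioo (-1:ℝ) 1) (hp0 : p ≤ 0) {ε : ℝ} (hε : 0 < ε) (a : ℝ) :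
    ∀ᶠ n : ℕ in atTop, 0 < (μ {ω | W n ω / n ∈ Set.Ioo a b}).toReal →
      (1/(n:ℝ)) * Real.log ((μ {ω | W n ω / n ∈ Set.Ioo a b}).toReal) ≤ -(p*b - 𝓦 p) + ε := by
  filter_upwards [GE_ev_int hmeas hlim hconv p hp,
    (hlim p hp).eventually_lt_const (show 𝓦 p < 𝓦 p + ε by linarith),
    eventually_ge_atTop 1] with n hI hZ hn1 hpos
  have hn0 : (0:ℝ) < n := by exact_mod_cast Nat.lt_of_lt_of_le Nat.zero_lt_one hn1
  set Z := ∫ ω, Real.exp (p * W n ω) ∂μ with hZdef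
  have hZpos : 0 < Z := GE_integral_exp_pos hI
  set S : Set Ω := {ω | W n ω ≤ (n:ℝ)*b} with hSdef
  have hSm : MeasurableSet S := measurableSet_le (hmeas n) measurable_const
  have hch : (μ S).toReal * Real.exp ((n:ℝ)*(p*b)) ≤ Z := by
    refine GE_chernoff (hmeas n) hSm (fun ω hω => ?_) hI
    have : W n ω ≤ (n:ℝ)*b := hω
    nlinarith
  have hsub : {ω | W n ω / n ∈ Set.Ioo a b} ⊆ S := by
    intro ω hω
    have h1 : W n ω / n < b := hω.2
    have h2 : W n ω < (n:ℝ)*b := by rwa [div_lt_iff₀ hn0, mul_comm] at h1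
    exact h2.le
  have hμ : (μ {ω | W n ω / n ∈ Set.Ioo a b}).toReal ≤ Z * Real.exp (-((n:ℝ)*(p*b))) := by
    have h1 : (μ {ω | W n ω / n ∈ Set.Ioo a b}).toReal ≤ (μ S).toReal :=
      ENNReal.toReal_mono (measure_ne_top μ S) (measure_mono hsub)
    have h2 : (μ S).toReal ≤ Z * Real.exp (-((n:ℝ)*(p*b))) := by
      have h3 := mul_le_mul_of_nonneg_right hch (Real.exp_pos (-((n:ℝ)*(p*b)))).le
      rw [mul_assoc, ← Real.exp_add] at h3
      simpa using h3
    linarith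
  have hlog : Real.log ((μ {ω | W n ω / n ∈ Set.Ioo a b}).toReal) ≤
      Real.log Z - (n:ℝ)*(p*b) := by
    have h1 := Real.log_le_log hpos hμ
    rwa [Real.log_mul hZpos.ne' (Real.exp_ne_zero _), Real.log_exp] at h1
  have h1 := mul_le_mul_of_nonneg_left hlog (show (0:ℝ) ≤ 1/(n:ℝ) by positivity)
  have h2 : (1/(n:ℝ)) * (Real.log Z - (n:ℝ)*(p*b)) = (1/(n:ℝ)) * Real.log Z - p*b := by
    field_simp
  rw [h2] at h1
  have h3 : (1/(n:ℝ)) * Real.log Z < 𝓦 p + ε := hZ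
  linarith

end UpperBound


/-- local Gärtner–Ellis large deviation principle. If the scaled cumulant
generating function `𝓦(p) = limₙ (1/n) log E[e^{pWₙ}]` exists on `(−1,1)`, is
differentiable and strictly convex there, and is `+∞` outside `[−1,1]`, and if
`c₋, c₊` are the one-sided limits of `𝓦′` at `−1, 1`, then for every open interval
`J = (a,b)` meeting `(c₋,c₊)`,
`limₙ (1/n) log P{Wₙ/n ∈ J} = −inf_{q ∈ J ∩ (c₋,c₊)} I(q)`, where
`I(q) = sup_{p ∈ (−1,1)} (pq − 𝓦(p))`. -/
theorem gartner_ellis_local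
    {Ω : Type*} [MeasurableSpace Ω] (μ : Measure Ω) [IsProbabilityMeasure μ]
    (W : ℕ → Ω → ℝ) (hmeas : ∀ n, Measurable (W n))
    (𝓦 : ℝ → ℝ)
    (hlim : ∀ p ∈ Set.Ioo (-1 : ℝ) 1,
      Tendsto (fun n : ℕ => (1 / (n : ℝ)) *
        Real.log (∫ ω, Real.exp (p * W n ω) ∂μ)) atTop (nhds (𝓦 p)))
    (hinfty : ∀ p : ℝ, 1 < |p| →
      Tendsto (fun n : ℕ => (1 / (n : ℝ)) *
        Real.log (∫ ω, Real.exp (p * W n ω) ∂μ)) atTop atTop)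
    (hdiff : DifferentiableOn ℝ 𝓦 (Set.Ioo (-1) 1))
    (hconv : StrictConvexOn ℝ (Set.Ioo (-1) 1) 𝓦)
    (cm cp : ℝ)
    (hcm : Tendsto (derivWithin 𝓦 (Set.Ioo (-1 : ℝ) 1))
      (nhdsWithin (-1) (Set.Ioi (-1))) (nhds cm))
    (hcp : Tendsto (derivWithin 𝓦 (Set.Ioo (-1 : ℝ) 1))
      (nhdsWithin 1 (Set.Iio 1)) (nhds cp)) :
    ∀ a b : ℝ, (Set.Ioo a b ∩ Set.Ioo cm cp).Nonempty →
      Tendsto (fun n : ℕ => (1 / (n : ℝ)) *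
          Real.log ((μ {ω | W n ω / n ∈ Set.Ioo a b}).toReal)) atTop
        (nhds (-sInf ((fun q => sSup ((fun p => p * q - 𝓦 p) '' Set.Ioo (-1 : ℝ) 1)) ''
          (Set.Ioo a b ∩ Set.Ioo cm cp)))) := by
  intro a b hne
  set F : ℝ → ℝ := fun q => sSup ((fun p => p * q - 𝓦 p) '' Set.Ioo (-1 : ℝ) 1) with hFdef
  set E : Set ℝ := Set.Ioo a b ∩ Set.Ioo cm cp with hEdef
  set M : ℝ := sInf (F '' E) with hMdef
  have hW0 : 𝓦 0 = 0 := GE_W0 hlim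
  have h0D : (0:ℝ) ∈ Set.Ioo (-1:ℝ) 1 := by constructor <;> norm_num
  set q0 : ℝ := derivWithin 𝓦 (Set.Ioo (-1:ℝ) 1) 0 with hq0def
  have hq0cm : cm < q0 := GE_cm_lt hdiff hconv hcm 0 h0D
  have hq0cp : q0 < cp := GE_lt_cp hdiff hconv hcp 0 h0D
  have hmono := hconv.strictMonoOn_derivWithin hdiff
  -- the structure of F on (cm, cp)
  have hub : ∀ q ∈ Set.Ioo cm cp, ∃ p ∈ Set.Ioo (-1:ℝ) 1,
      derivWithin 𝓦 (Set.Ioo (-1:ℝ) 1) p = q ∧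
      (∀ r ∈ Set.Ioo (-1:ℝ) 1, r*q - 𝓦 r ≤ p*q - 𝓦 p) ∧ F q = p*q - 𝓦 p := by
    intro q hq
    obtain ⟨p, hpD, hpq⟩ := GE_surj hdiff hcm hcp q hq
    have hubp : ∀ r ∈ Set.Ioo (-1:ℝ) 1, r*q - 𝓦 r ≤ p*q - 𝓦 p := by
      intro r hr
      have h := GE_subgrad hdiff hconv p hpD r hr
      rw [hpq] at h
      nlinarith
    have hFq : F q = p*q - 𝓦 p := by
      have h := GE_sup hdiff hconv hpD
      rw [hpq] at h
      exact h
    exact ⟨p, hpD, hpq, hubp, hFq⟩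
  have hFnonneg : ∀ q ∈ Set.Ioo cm cp, 0 ≤ F q := by
    intro q hq
    obtain ⟨p, hpD, hpq, hubp, hFq⟩ := hub q hq
    have := hubp 0 h0D
    rw [hW0] at this
    rw [hFq]
    nlinarith
  have hKne : (F '' E).Nonempty := hne.image _
  have hKbdd : BddBelow (F '' E) := by
    refine ⟨0, ?_⟩
    rintro y ⟨q, hqE, rfl⟩
    exact hFnonneg q hqE.2
  have hKlb : ∀ y ∈ F '' E, (0:ℝ) ≤ y := by
    rintro y ⟨q, hqE, rfl⟩
    exact hFnonneg q hqE.2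
  have hM0 : 0 ≤ M := le_csInf hKne hKlb
  -- lower bound: for each ε > 0
  have hlower : ∀ ε : ℝ, 0 < ε → ∀ᶠ n : ℕ in atTop,
      0 < (μ {ω | W n ω / n ∈ Set.Ioo a b}).toReal ∧
      -M - ε ≤ (1/(n:ℝ)) * Real.log ((μ {ω | W n ω / n ∈ Set.Ioo a b}).toReal) := by
    intro ε hε
    obtain ⟨k, hkmem, hk⟩ := Real.lt_sInf_add_pos hKne (show 0 < ε/4 by linarith)
    obtain ⟨q, hqE, rfl⟩ := hkmem
    obtain ⟨p, hpD, hpq, hubp, hFq⟩ := hub q hqE.2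
    have hqa : a < q := hqE.1.1
    have hqb : q < b := hqE.1.2
    set δ : ℝ := min (min (q - a) (b - q)) (ε/4) with hδdef
    have hδpos : 0 < δ := lt_min (lt_min (by linarith) (by linarith)) (by linarith)
    have hδa : δ ≤ q - a := le_trans (min_le_left _ _) (min_le_left _ _)
    have hδb : δ ≤ b - q := le_trans (min_le_left _ _) (min_le_right _ _)
    have hδε : δ ≤ ε/4 := min_le_right _ _
    have hlo := GE_lower (a := a) (b := b) hmeas hlim hdiff hconv hpD hδpos
      (show 0 < ε/2 by linarith) (by rw [hpq]; linarith) (by rw [hpq]; linarith)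
    filter_upwards [hlo] with n hn
    refine ⟨hn.1, ?_⟩
    have h1 := hn.2
    rw [hpq] at h1
    have h2 : F q < M + ε/4 := hk
    rw [hFq] at h2
    linarith
  -- upper bound: for each ε > 0, eventually (pos → u ≤ -M + ε)
  have hupper : ∀ ε : ℝ, 0 < ε → ∀ᶠ n : ℕ in atTop,
      0 < (μ {ω | W n ω / n ∈ Set.Ioo a b}).toReal →
      (1/(n:ℝ)) * Real.log ((μ {ω | W n ω / n ∈ Set.Ioo a b}).toReal) ≤ -M + ε := by
    rcases le_or_gt a q0 with haq | haq
    · rcases lt_or_ge q0 b with hq0b | hq0b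
      · rcases lt_or_ge a q0 with haq' | haq'
        · -- middle case : M = 0
          have hq0E : q0 ∈ E := ⟨⟨haq', hq0b⟩, hq0cm, hq0cp⟩
          have hFq0 : F q0 = 0 := by
            have h := GE_sup hdiff hconv h0D
            rw [hW0] at h
            simpa using h
          have hMle : M ≤ 0 := csInf_le hKbdd ⟨q0, hq0E, hFq0⟩
          have hMeq : M = 0 := le_antisymm hMle hM0
          intro ε hε
          filter_upwards [eventually_ge_atTop 1] with n hn1 hpos
          have hn0 : (0:ℝ) < n := by exact_mod_cast Nat.lt_of_lt_of_le Nat.zero_lt_one hn1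
          have h1 : (μ {ω | W n ω / n ∈ Set.Ioo a b}).toReal ≤ 1 := by
            rw [← ENNReal.toReal_one]
            exact ENNReal.toReal_mono ENNReal.one_ne_top prob_le_one
          have h2 : Real.log ((μ {ω | W n ω / n ∈ Set.Ioo a b}).toReal) ≤ 0 :=
            Real.log_nonpos hpos.le h1
          have h3 : (1/(n:ℝ)) * Real.log ((μ {ω | W n ω / n ∈ Set.Ioo a b}).toReal) ≤ 0 := by
            have : (0:ℝ) ≤ 1/(n:ℝ) := by positivity
            nlinarith
          rw [hMeq]
          linarith
        · -- a = q0 essentially (q0 ≤ a and a ≤ q0) : treat as right case with p = 0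
          have haq0 : a = q0 := le_antisymm haq haq'
          -- M = F a = 0
          have haE : a ∈ Set.Ioo cm cp := ⟨by rw [haq0]; exact hq0cm, by rw [haq0]; exact hq0cp⟩
          obtain ⟨pa, hpaD, hpaq, hubpa, hFa⟩ := hub a haE
          have hpa0 : 0 ≤ pa := by
            by_contra hneg
            push_neg at hneg
            have := hmono hpaD h0D hneg
            rw [hpaq, ← hq0def] at this
            exact absurd haq0 (ne_of_lt this)
          have hFaM : M = F a := by
            have hge : ∀ k ∈ F '' E, F a ≤ k := by
              rintro k ⟨q, hqE, rfl⟩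
              obtain ⟨pq, hpqD, hpqq, hubq, hFq⟩ := hub q hqE.2
              have h1 : pa * q - 𝓦 pa ≤ F q := by rw [hFq]; exact hubq pa hpaD
              have h2 : pa * a - 𝓦 pa ≤ pa * q - 𝓦 pa := by
                have : a < q := hqE.1.1
                nlinarith
              rw [hFa]
              linarith
            have hle : M ≤ F a := by
              refine le_of_forall_pos_le_add fun ε' hε' => ?_
              obtain ⟨qx, hqE⟩ := hne
              set q : ℝ := min ((a+b)/2) (min ((a+cp)/2) (a + ε'/2)) with hqdef
              have hqa : a < q := by
                have h1 : a < b := lt_trans hqE.1.1 hqE.1.2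
                have h2 : a < cp := lt_trans hqE.1.1 hqE.2.2
                exact lt_min (by linarith) (lt_min (by linarith) (by linarith))
              have hqb : q < b := lt_of_le_of_lt (min_le_left _ _)
                (by have h1 : a < b := lt_trans hqE.1.1 hqE.1.2; linarith)
              have hqcp : q < cp := lt_of_le_of_lt (le_trans (min_le_right _ _) (min_le_left _ _))
                (by have h2 : a < cp := lt_trans hqE.1.1 hqE.2.2; linarith)
              have hqεa : q ≤ a + ε'/2 := le_trans (min_le_right _ _) (min_le_right _ _)
              have hqEmem : q ∈ E := ⟨⟨hqa, hqb⟩, lt_trans haE.1 hqa, hqcp⟩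
              have hMq : M ≤ F q := csInf_le hKbdd ⟨q, hqEmem, rfl⟩
              obtain ⟨pq, hpqD, hpqq, hubq, hFq⟩ := hub q ⟨lt_trans haE.1 hqa, hqcp⟩
              have h1 : pq * a - 𝓦 pq ≤ F a := by rw [hFa]; exact hubpa pq hpqD
              have h2 : F q ≤ F a + (q - a) := by
                rw [hFq]
                have hpq1 : pq < 1 := hpqD.2
                nlinarith
              linarith
            exact le_antisymm hle (le_csInf hKne hge)
          intro ε hε
          have hupr := GE_upper_right (a := a) hmeas hlim hconv hpaD hpa0 hε b
          filter_upwards [hupr] with n hn hpos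
          have := hn hpos
          rw [hFaM, hFa]
          linarith
      · -- left case : b ≤ q0
        have hbcm : cm < b := by
          obtain ⟨qx, hqE⟩ := hne
          exact lt_trans hqE.2.1 hqE.1.2
        have hbcp : b < cp := lt_of_le_of_lt hq0b hq0cp
        have hbE : b ∈ Set.Ioo cm cp := ⟨hbcm, hbcp⟩
        obtain ⟨pb, hpbD, hpbq, hubpb, hFb⟩ := hub b hbE
        have hpb0 : pb ≤ 0 := by
          by_contra hneg
          push_neg at hneg
          have := hmono h0D hpbD hneg
          rw [hpbq, ← hq0def] at this
          exact absurd this (not_lt.mpr hq0b)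
        have hFbM : M = F b := by
          have hge : ∀ k ∈ F '' E, F b ≤ k := by
            rintro k ⟨q, hqE, rfl⟩
            obtain ⟨pq, hpqD, hpqq, hubq, hFq⟩ := hub q hqE.2
            have h1 : pb * q - 𝓦 pb ≤ F q := by rw [hFq]; exact hubq pb hpbD
            have h2 : pb * b - 𝓦 pb ≤ pb * q - 𝓦 pb := by
              have : q < b := hqE.1.2
              nlinarith
            rw [hFb]
            linarith
          have hle : M ≤ F b := by
            refine le_of_forall_pos_le_add fun ε' hε' => ?_
            obtain ⟨qx, hqE⟩ := hne
            set q : ℝ := max ((a+b)/2) (max ((cm+b)/2) (b - ε'/2)) with hqdef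
            have hqb : q < b := by
              have h1 : a < b := lt_trans hqE.1.1 hqE.1.2
              have h2 : cm < b := hbcm
              exact max_lt (by linarith) (max_lt (by linarith) (by linarith))
            have hqa : a < q := lt_of_lt_of_le
              (by have h1 : a < b := lt_trans hqE.1.1 hqE.1.2; linarith) (le_max_left _ _)
            have hqcm : cm < q := lt_of_lt_of_le (by linarith)
              (le_trans (le_max_left _ _) (le_max_right _ _))
            have hqεb : b - ε'/2 ≤ q := le_trans (le_max_right _ _) (le_max_right _ _)
            have hqcp : q < cp := lt_trans hqb hbcp
            have hqEmem : q ∈ E := ⟨⟨hqa, hqb⟩, hqcm, hqcp⟩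
            have hMq : M ≤ F q := csInf_le hKbdd ⟨q, hqEmem, rfl⟩
            obtain ⟨pq, hpqD, hpqq, hubq, hFq⟩ := hub q ⟨hqcm, hqcp⟩
            have h1 : pq * b - 𝓦 pq ≤ F b := by rw [hFb]; exact hubpb pq hpqD
            have h2 : F q ≤ F b + (b - q) := by
              rw [hFq]
              have hpq1 : -1 < pq := hpqD.1
              nlinarith
            linarith
          exact le_antisymm hle (le_csInf hKne hge)
        intro ε hε
        have hupl := GE_upper_left (b := b) hmeas hlim hconv hpbD hpb0 hε a
        filter_upwards [hupl] with n hn hpos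
        have := hn hpos
        rw [hFbM, hFb]
        linarith
    · -- right case : q0 < a
      have hacm : cm < a := lt_trans hq0cm haq
      have hacp : a < cp := by
        obtain ⟨qx, hqE⟩ := hne
        exact lt_trans hqE.1.1 hqE.2.2
      have haE : a ∈ Set.Ioo cm cp := ⟨hacm, hacp⟩
      obtain ⟨pa, hpaD, hpaq, hubpa, hFa⟩ := hub a haE
      have hpa0 : 0 ≤ pa := by
        by_contra hneg
        push_neg at hneg
        have := hmono hpaD h0D hneg
        rw [hpaq, ← hq0def] at this
        exact absurd (lt_trans this haq) (lt_irrefl a)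
      have hFaM : M = F a := by
        have hge : ∀ k ∈ F '' E, F a ≤ k := by
          rintro k ⟨q, hqE, rfl⟩
          obtain ⟨pq, hpqD, hpqq, hubq, hFq⟩ := hub q hqE.2
          have h1 : pa * q - 𝓦 pa ≤ F q := by rw [hFq]; exact hubq pa hpaD
          have h2 : pa * a - 𝓦 pa ≤ pa * q - 𝓦 pa := by
            have : a < q := hqE.1.1
            nlinarith
          rw [hFa]
          linarith
        have hle : M ≤ F a := by
          refine le_of_forall_pos_le_add fun ε' hε' => ?_
          obtain ⟨qx, hqE⟩ := hne
          set q : ℝ := min ((a+b)/2) (min ((a+cp)/2) (a + ε'/2)) with hqdef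
          have hqa : a < q := by
            have h1 : a < b := lt_trans hqE.1.1 hqE.1.2
            exact lt_min (by linarith) (lt_min (by linarith) (by linarith))
          have hqb : q < b := lt_of_le_of_lt (min_le_left _ _)
            (by have h1 : a < b := lt_trans hqE.1.1 hqE.1.2; linarith)
          have hqcp : q < cp := lt_of_le_of_lt (le_trans (min_le_right _ _) (min_le_left _ _))
            (by linarith)
          have hqεa : q ≤ a + ε'/2 := le_trans (min_le_right _ _) (min_le_right _ _)
          have hqEmem : q ∈ E := ⟨⟨hqa, hqb⟩, lt_trans hacm hqa, hqcp⟩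
          have hMq : M ≤ F q := csInf_le hKbdd ⟨q, hqEmem, rfl⟩
          obtain ⟨pq, hpqD, hpqq, hubq, hFq⟩ := hub q ⟨lt_trans hacm hqa, hqcp⟩
          have h1 : pq * a - 𝓦 pq ≤ F a := by rw [hFa]; exact hubpa pq hpqD
          have h2 : F q ≤ F a + (q - a) := by
            rw [hFq]
            have hpq1 : pq < 1 := hpqD.2
            nlinarith
          linarith
        exact le_antisymm hle (le_csInf hKne hge)
      intro ε hε
      have hupr := GE_upper_right (a := a) hmeas hlim hconv hpaD hpa0 hε b
      filter_upwards [hupr] with n hn hpos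
      have := hn hpos
      rw [hFaM, hFa]
      linarith
  -- conclude
  rw [Metric.tendsto_atTop]
  intro ε hε
  have hcomb := ((hlower (ε/2) (by linarith)).and (hupper (ε/2) (by linarith)))
  rw [eventually_atTop] at hcomb
  obtain ⟨N, hN⟩ := hcomb
  refine ⟨N, fun n hn => ?_⟩
  obtain ⟨⟨hpos, hlo⟩, hup⟩ := hN n hn
  have hup' := hup hpos
  rw [Real.dist_eq]
  rw [abs_lt]
  constructor <;> [linarith; linarith]
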